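/- Let 𝔇 ≥ 1 be an integer and p an odd prime not dividing 𝔇, and let R = ℤ[√−𝔇]/(p). Then the number of pairs (c, d) ∈ R² for which there exist a, b ∈ R with a·d − b·c = 1 equals (p² − 1)² if −𝔇 is a square modulo p, and equals p⁴ − 1 if −𝔇 is not a square modulo p. -/

import Mathlib

open Polynomial

section Aux

variable {A B : Type*} [CommRing A] [CommRing B]

lemma unimod_card_congr (e : A ≃+* B) :
    Nat.card {cd : A × A // ∃ a b : A, a * cd.2 - b * cd.1 = 1}
      = Nat.card {cd : B × B // ∃ a b : B, a * cd.2 - b * cd.1 = 1} := by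
  refine Nat.card_congr ((Equiv.prodCongr e.toEquiv e.toEquiv).subtypeEquiv ?_)
  rintro ⟨c, d⟩
  constructor
  · rintro ⟨a, b, h⟩
    exact ⟨e a, e b, by
      have := congrArg e h
      simpa [map_sub, map_mul] using this⟩
  · rintro ⟨a, b, h⟩
    refine ⟨e.symm a, e.symm b, e.injective ?_⟩
    simpa [map_sub, map_mul] using h

lemma unimod_iff_ne_zero {K : Type*} [Field K] (c d : K) :
    (∃ a b : K, a * d - b * c = 1) ↔ (c, d) ≠ 0 := by
  constructor
  · rintro ⟨a, b, h⟩ h0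
    simp only [Prod.ext_iff, Prod.fst_zero, Prod.snd_zero] at h0
    obtain ⟨hc, hd⟩ := h0
    rw [hc, hd] at h
    simp at h
  · intro h0
    by_cases hd : d = 0
    · have hc : c ≠ 0 := by
        intro hc; exact h0 (by simp [hc, hd, Prod.ext_iff])
      exact ⟨0, -c⁻¹, by field_simp; ring⟩
    · exact ⟨d⁻¹, 0, by field_simp; ring⟩

lemma unimod_card_field (K : Type*) [Field K] [Finite K] :
    Nat.card {cd : K × K // ∃ a b : K, a * cd.2 - b * cd.1 = 1}
      = Nat.card K ^ 2 - 1 := by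
  classical
  haveI : Fintype K := Fintype.ofFinite K
  have e : {cd : K × K // ∃ a b : K, a * cd.2 - b * cd.1 = 1} ≃ {cd : K × K // cd ≠ 0} :=
    Equiv.subtypeEquivRight fun cd => unimod_iff_ne_zero cd.1 cd.2
  rw [Nat.card_congr e, Nat.card_eq_fintype_card]
  have : Fintype.card {cd : K × K // cd ≠ 0} = Fintype.card (K × K) - 1 :=
    Set.card_ne_eq (0 : K × K)
  rw [this, Nat.card_eq_fintype_card, Fintype.card_prod, sq]

lemma unimod_prod_iff (cd : (A × B) × (A × B)) :
    (∃ a b : A × B, a * cd.2 - b * cd.1 = 1) ↔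
      ((∃ a b : A, a * cd.2.1 - b * cd.1.1 = 1) ∧ (∃ a b : B, a * cd.2.2 - b * cd.1.2 = 1)) := by
  constructor
  · rintro ⟨a, b, h⟩
    rw [Prod.ext_iff] at h
    exact ⟨⟨a.1, b.1, by simpa using h.1⟩, ⟨a.2, b.2, by simpa using h.2⟩⟩
  · rintro ⟨⟨a1, b1, h1⟩, ⟨a2, b2, h2⟩⟩
    exact ⟨(a1, a2), (b1, b2), Prod.ext (by simpa) (by simpa)⟩

lemma unimod_card_prod :
    Nat.card {cd : (A × B) × (A × B) // ∃ a b : A × B, a * cd.2 - b * cd.1 = 1}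
      = Nat.card {cd : A × A // ∃ a b : A, a * cd.2 - b * cd.1 = 1}
        * Nat.card {cd : B × B // ∃ a b : B, a * cd.2 - b * cd.1 = 1} := by
  rw [← Nat.card_prod]
  refine Nat.card_congr (((Equiv.prodProdProdComm A B A B).subtypeEquiv ?_).trans
    (Equiv.subtypeProdEquivProd))
  rintro ⟨⟨c1, c2⟩, ⟨d1, d2⟩⟩
  simpa [Equiv.prodProdProdComm] using unimod_prod_iff (A := A) (B := B) ((c1, c2), (d1, d2))

end Aux


/-- The ring `ℤ[√−𝔇]`, modelled as `ℤ[X]/(X² + 𝔇)`. -/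
abbrev ZsqrtNeg (𝔇 : ℕ) : Type := AdjoinRoot ((Polynomial.X : Polynomial ℤ) ^ 2 + Polynomial.C (𝔇 : ℤ))

/-- The quotient ring `R = ℤ[√−𝔇]/(p)`. -/
abbrev Rmod (𝔇 p : ℕ) : Type := ZsqrtNeg 𝔇 ⧸ Ideal.span {(p : ZsqrtNeg 𝔇)}

noncomputable def rmodEquiv (𝔇 p : ℕ) :
    Rmod 𝔇 p ≃+* AdjoinRoot ((X : (ZMod p)[X]) ^ 2 + C (𝔇 : ZMod p)) := by
  set f : ℤ[X] := X ^ 2 + C (𝔇 : ℤ) with hf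
  have e0 : Rmod 𝔇 p ≃+* AdjoinRoot f ⧸ (Ideal.span {((p : ℕ) : ℤ)}).map (AdjoinRoot.of f) :=
    Ideal.quotEquivOfEq (by rw [Ideal.map_span, Set.image_singleton]; simp; rfl)
  have e1 := AdjoinRoot.quotAdjoinRootEquivQuotPolynomialQuot (Ideal.span {((p : ℕ) : ℤ)}) f
  let ε : (ℤ ⧸ Ideal.span {((p : ℕ) : ℤ)}) ≃+* ZMod p := Int.quotientSpanNatEquivZMod p
  have key : Ideal.span {(X : (ZMod p)[X]) ^ 2 + C (𝔇 : ZMod p)} =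
      (Ideal.span {f.map (Ideal.Quotient.mk (Ideal.span {((p : ℕ) : ℤ)}))}).map
        ((Polynomial.mapEquiv ε : _ ≃+* (ZMod p)[X]) : _ →+* (ZMod p)[X]) := by
    have h1 : (((Polynomial.mapEquiv ε : _ ≃+* (ZMod p)[X])) : _ →+* (ZMod p)[X])
          (f.map (Ideal.Quotient.mk (Ideal.span {((p : ℕ) : ℤ)})))
        = X ^ 2 + C (𝔇 : ZMod p) := by
      show (Polynomial.mapEquiv ε) (f.map (Ideal.Quotient.mk (Ideal.span {((p : ℕ) : ℤ)})))
          = X ^ 2 + C (𝔇 : ZMod p)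
      rw [Polynomial.mapEquiv_apply, Polynomial.map_map,
        Subsingleton.elim ((ε : _ →+* ZMod p).comp (Ideal.Quotient.mk
          (Ideal.span {((p : ℕ) : ℤ)}))) (Int.castRingHom (ZMod p))]
      simp [hf]
    rw [Ideal.map_span, Set.image_singleton, h1]
  have e2 := Ideal.quotientEquiv _ _ (Polynomial.mapEquiv ε) key
  exact e0.trans (e1.trans e2)

theorem unimodular_pair_count (𝔇 : ℕ) (h𝔇 : 1 ≤ 𝔇) (p : ℕ) (hp : p.Prime) (hodd : Odd p)
    (hpD : ¬ p ∣ 𝔇) :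
    (IsSquare (-(𝔇 : ZMod p)) →
      Nat.card {cd : Rmod 𝔇 p × Rmod 𝔇 p // ∃ a b : Rmod 𝔇 p, a * cd.2 - b * cd.1 = 1}
        = (p ^ 2 - 1) ^ 2) ∧
    (¬ IsSquare (-(𝔇 : ZMod p)) →
      Nat.card {cd : Rmod 𝔇 p × Rmod 𝔇 p // ∃ a b : Rmod 𝔇 p, a * cd.2 - b * cd.1 = 1}
        = p ^ 4 - 1) := by
  haveI : Fact p.Prime := ⟨hp⟩
  set g : (ZMod p)[X] := X ^ 2 + C (𝔇 : ZMod p) with hg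
  have hmonic : g.Monic := monic_X_pow_add_C _ two_ne_zero
  have hdeg : g.natDegree = 2 := natDegree_X_pow_add_C
  have hD0 : (𝔇 : ZMod p) ≠ 0 := by
    rwa [Ne, ZMod.natCast_eq_zero_iff]
  have h2 : (2 : ZMod p) ≠ 0 := by
    intro h2
    have : ((2 : ℕ) : ZMod p) = 0 := by exact_mod_cast h2
    rw [ZMod.natCast_eq_zero_iff] at this
    have := (Nat.prime_dvd_prime_iff_eq hp Nat.prime_two).mp this
    rw [this, Nat.odd_iff] at hodd
    omega
  constructor
  · -- square case
    rintro ⟨s, hs⟩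
    have hs0 : s ≠ 0 := by
      rintro rfl
      rw [mul_zero, neg_eq_zero] at hs
      exact hD0 hs
    have h2s : (2 * s : ZMod p) ≠ 0 := mul_ne_zero h2 hs0
    have hcop : IsCoprime ((X : (ZMod p)[X]) - C s) (X + C s) := by
      refine ⟨-C ((2 * s)⁻¹), C ((2 * s)⁻¹), ?_⟩
      have h1 : ((2 * s)⁻¹ * (2 * s) : ZMod p) = 1 := inv_mul_cancel₀ h2s
      have h2' : (C ((2 * s)⁻¹) : (ZMod p)[X]) * C (2 * s) = 1 := by
        rw [← C_mul, h1, C_1]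
      have h3 : (C (2 * s) : (ZMod p)[X]) = 2 * C s := by rw [C_mul, map_ofNat]
      rw [h3] at h2'
      linear_combination h2'
    have hfact : g = ((X : (ZMod p)[X]) - C s) * (X + C s) := by
      have hD : (𝔇 : ZMod p) = -(s * s) := by linear_combination -hs
      rw [hg, hD, C_neg, C_mul]
      ring
    have hspan : (Ideal.span {g} : Ideal (ZMod p)[X]) =
        Ideal.span {(X : (ZMod p)[X]) - C s} * Ideal.span {(X : (ZMod p)[X]) + C s} := by
      rw [Ideal.span_singleton_mul_span_singleton, ← hfact]
    have e1 : AdjoinRoot g ≃+*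
        ((ZMod p)[X] ⧸ Ideal.span {(X : (ZMod p)[X]) - C s}) ×
          ((ZMod p)[X] ⧸ Ideal.span {(X : (ZMod p)[X]) + C s}) :=
      (Ideal.quotEquivOfEq hspan).trans (Ideal.quotientMulEquivQuotientProd _ _
        ((Ideal.isCoprime_span_singleton_iff _ _).mpr hcop))
    have e2 : ((ZMod p)[X] ⧸ Ideal.span {(X : (ZMod p)[X]) - C s}) ≃+* ZMod p :=
      (Polynomial.quotientSpanXSubCAlgEquiv s).toRingEquiv
    have e3 : ((ZMod p)[X] ⧸ Ideal.span {(X : (ZMod p)[X]) + C s}) ≃+* ZMod p :=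
      (Ideal.quotEquivOfEq (by rw [map_neg, sub_neg_eq_add])).trans
        (Polynomial.quotientSpanXSubCAlgEquiv (-s)).toRingEquiv
    have e : Rmod 𝔇 p ≃+* ZMod p × ZMod p :=
      ((rmodEquiv 𝔇 p).trans e1).trans (RingEquiv.prodCongr e2 e3)
    rw [unimod_card_congr e, unimod_card_prod, unimod_card_field (ZMod p), Nat.card_zmod]
    exact (sq _).symm
  · -- nonsquare case
    intro h
    have hirr : Irreducible g := by
      rw [hmonic.irreducible_iff_roots_eq_zero_of_degree_le_three (by omega) (by omega)]
      rw [Multiset.eq_zero_iff_forall_notMem]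
      intro r hr
      rw [mem_roots hmonic.ne_zero] at hr
      have hr' : r ^ 2 + (𝔇 : ZMod p) = 0 := by
        simpa [hg, IsRoot] using hr
      exact h ⟨r, by linear_combination -hr'⟩
    haveI : Fact (Irreducible g) := ⟨hirr⟩
    let b := AdjoinRoot.powerBasisAux' hmonic
    let eq : AdjoinRoot g ≃ (Fin g.natDegree → ZMod p) := b.equivFun.toEquiv
    haveI : Finite (AdjoinRoot g) := Finite.of_equiv _ eq.symm
    have hcard : Nat.card (AdjoinRoot g) = p ^ 2 := by
      rw [Nat.card_congr eq, Nat.card_fun, Nat.card_zmod, Nat.card_eq_fintype_card,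
        Fintype.card_fin, hdeg]
    rw [unimod_card_congr ((rmodEquiv 𝔇 p)), unimod_card_field (AdjoinRoot g), hcard, ← pow_mul]
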